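/- Let S be a nonempty finite set, A ⊆ S, and let T, T_mod : S → S → ℝ be two row-stochastic matrices such that (i) T_mod s s' = T s s' whenever s ∉ A, and (ii) every a ∈ A is absorbing under T_mod (T_mod a a = 1). Then for every initial probability distribution ι on S, the probability under the original chain T of ever visiting A equals the long-run average expected occupation of A under the modified chain T_mod: Pr_{T,ι}[ ∃ t ≥ 0, X_t ∈ A ] = lim_{t→∞} (1/t) E_{T_mod,ι}[ Σ_{k=0}^{t-1} 1(X_k ∈ A) ]. -/

import Mathlib

open Filter Topology MeasureTheory

private noncomputable def cylExt {S : Type*} [Nonempty S] (n : ℕ) (v : Fin (n+1) → S) : ℕ → S :=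
  fun i => if h : i < n + 1 then v ⟨i, h⟩ else Classical.arbitrary S

private lemma cylExt_coe {S : Type*} [Nonempty S] (n : ℕ) (v : Fin (n+1) → S)
    (i : Fin (n+1)) : cylExt n v (i : ℕ) = v i := by
  simp [cylExt, i.isLt]

private lemma cyl_measurable {S : Type*} [MeasurableSpace S] [MeasurableSingletonClass S]
    (n : ℕ) (s : ℕ → S) : MeasurableSet {ω : ℕ → S | ∀ i ≤ n, ω i = s i} := by
  have h : {ω : ℕ → S | ∀ i ≤ n, ω i = s i}
      = ⋂ i ∈ Set.Iic n, (fun ω : ℕ → S => ω i) ⁻¹' {s i} := by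
    ext ω; simp [Set.mem_iInter]
  rw [h]
  exact MeasurableSet.biInter (Set.to_countable _)
    (fun i _ => measurable_pi_apply i (measurableSet_singleton _))

private lemma cyl_decomp {S : Type*} [Fintype S] [Nonempty S] [DecidableEq S]
    [MeasurableSpace S] [MeasurableSingletonClass S]
    (ν : Measure (ℕ → S)) (n : ℕ) (P : (Fin (n+1) → S) → Prop) [DecidablePred P] :
    ν {ω | P (fun i => ω (i : ℕ))}
      = ∑ v ∈ Finset.univ.filter P, ν {ω | ∀ i ≤ n, ω i = cylExt n v i} := by
  have hset : {ω : ℕ → S | P (fun i => ω (i : ℕ))}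
      = ⋃ v ∈ Finset.univ.filter P, {ω : ℕ → S | ∀ i ≤ n, ω i = cylExt n v i} := by
    ext ω
    simp only [Set.mem_iUnion, Finset.mem_filter, Finset.mem_univ, true_and,
      Set.mem_setOf_eq, exists_prop]
    constructor
    · intro h
      refine ⟨fun i => ω (i : ℕ), h, fun i hi => ?_⟩
      have : cylExt n (fun i : Fin (n+1) => ω (i : ℕ)) ((⟨i, Nat.lt_succ_of_le hi⟩ : Fin (n+1)) : ℕ)
          = ω i := cylExt_coe n _ _
      simpa using this.symm
    · rintro ⟨v, hv, hω⟩
      have : (fun i : Fin (n+1) => ω (i : ℕ)) = v := by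
        funext i
        have h1 := hω (i : ℕ) (Nat.lt_succ_iff.mp i.isLt)
        rw [h1, cylExt_coe]
      rwa [this]
  rw [hset, measure_biUnion_finset ?_ (fun v _ => cyl_measurable n (cylExt n v))]
  intro v _ w _ hvw
  simp only [Function.onFun]
  rw [Set.disjoint_left]
  intro ω hv hw
  apply hvw
  funext i
  have h1 := hv (i : ℕ) (Nat.lt_succ_iff.mp i.isLt)
  have h2 := hw (i : ℕ) (Nat.lt_succ_iff.mp i.isLt)
  rw [← cylExt_coe n v i, ← h1, h2, cylExt_coe]

theorem hitting_prob_eq_average_occupation_modified {S : Type*}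
    [Fintype S] [Nonempty S] [DecidableEq S]
    [MeasurableSpace S] [MeasurableSingletonClass S]
    (T Tmod : Matrix S S ℝ)
    (hnn : ∀ s s', 0 ≤ T s s') (hrow : ∀ s, ∑ s', T s s' = 1)
    (hnn' : ∀ s s', 0 ≤ Tmod s s') (hrow' : ∀ s, ∑ s', Tmod s s' = 1)
    (A : Finset S)
    (hagree : ∀ s s' : S, s ∉ A → Tmod s s' = T s s')
    (habs : ∀ a ∈ A, Tmod a a = 1)
    (ι : S → ℝ) (hιnn : ∀ s, 0 ≤ ι s) (hιsum : ∑ s, ι s = 1)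
    (μ μmod : Measure (ℕ → S)) [IsProbabilityMeasure μ] [IsProbabilityMeasure μmod]
    (hμ : ∀ (n : ℕ) (s : ℕ → S),
      μ {ω | ∀ i ≤ n, ω i = s i}
        = ENNReal.ofReal (ι (s 0) * ∏ t ∈ Finset.range n, T (s t) (s (t + 1))))
    (hμmod : ∀ (n : ℕ) (s : ℕ → S),
      μmod {ω | ∀ i ≤ n, ω i = s i}
        = ENNReal.ofReal (ι (s 0) * ∏ t ∈ Finset.range n, Tmod (s t) (s (t + 1)))) :
    Tendsto
      (fun t : ℕ =>
        (t : ℝ)⁻¹ * ∫ ω, (∑ k ∈ Finset.range t, (if ω k ∈ A then (1 : ℝ) else 0)) ∂μmod)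
      atTop (nhds (μ {ω | ∃ t : ℕ, ω t ∈ A}).toReal) := by
  classical
  -- occupation sets
  set Oc : ℕ → Set (ℕ → S) := fun k => {ω | ω k ∈ A} with hOc
  have hOcMeas : ∀ k, MeasurableSet (Oc k) :=
    fun k => measurable_pi_apply k (A.finite_toSet.measurableSet)
  -- rows of absorbing states are point masses
  have hzero : ∀ a ∈ A, ∀ b, b ≠ a → Tmod a b = 0 := by
    intro a ha b hb
    have h1 : ∑ s' ∈ Finset.univ.erase a, Tmod a s' = 0 := by
      have h2 := hrow' a
      rw [← Finset.add_sum_erase _ _ (Finset.mem_univ a), habs a ha] at h2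
      linarith
    exact (Finset.sum_eq_zero_iff_of_nonneg (fun s' _ => hnn' a s')).mp h1 b
      (Finset.mem_erase.mpr ⟨hb, Finset.mem_univ b⟩)
  -- "leaving A" events are null under μmod
  have hbad : ∀ k, μmod {ω | ω k ∈ A ∧ ω (k+1) ∉ A} = 0 := by
    intro k
    have hcover : {ω : ℕ → S | ω k ∈ A ∧ ω (k+1) ∉ A}
        ⊆ ⋃ v : Fin (k+2) → S,
          ({ω : ℕ → S | ∀ i ≤ k+1, ω i = cylExt (k+1) v i}
            ∩ {ω : ℕ → S | ω k ∈ A ∧ ω (k+1) ∉ A}) := by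
      intro ω hω
      refine Set.mem_iUnion.mpr ⟨fun i => ω (i : ℕ), ⟨fun i hi => ?_, hω⟩⟩
      have : cylExt (k+1) (fun i : Fin (k+2) => ω (i : ℕ))
          ((⟨i, Nat.lt_succ_of_le hi⟩ : Fin (k+2)) : ℕ) = ω i := cylExt_coe (k+1) _ _
      simpa using this.symm
    refine le_antisymm ?_ zero_le
    refine le_trans (measure_mono hcover) (le_trans (measure_iUnion_le _) ?_)
    have hterm : ∀ v : Fin (k+2) → S,
        μmod ({ω : ℕ → S | ∀ i ≤ k+1, ω i = cylExt (k+1) v i}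
          ∩ {ω : ℕ → S | ω k ∈ A ∧ ω (k+1) ∉ A}) = 0 := by
      intro v
      by_cases hc : v ⟨k, by omega⟩ ∈ A ∧ v ⟨k+1, by omega⟩ ∉ A
      · refine measure_mono_null Set.inter_subset_left ?_
        rw [hμmod (k+1) (cylExt (k+1) v)]
        have hk : cylExt (k+1) v k = v ⟨k, by omega⟩ := cylExt_coe (k+1) v ⟨k, by omega⟩
        have hk1 : cylExt (k+1) v (k+1) = v ⟨k+1, by omega⟩ := cylExt_coe (k+1) v ⟨k+1, by omega⟩
        have hfac : Tmod (cylExt (k+1) v k) (cylExt (k+1) v (k+1)) = 0 := by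
          rw [hk, hk1]
          refine hzero _ hc.1 _ ?_
          intro he
          exact hc.2 (he ▸ hc.1)
        rw [Finset.prod_eq_zero (Finset.self_mem_range_succ k) hfac, mul_zero,
          ENNReal.ofReal_zero]
      · have : {ω : ℕ → S | ∀ i ≤ k+1, ω i = cylExt (k+1) v i}
            ∩ {ω : ℕ → S | ω k ∈ A ∧ ω (k+1) ∉ A} = ∅ := by
          ext ω
          simp only [Set.mem_inter_iff, Set.mem_setOf_eq, Set.mem_empty_iff_false, iff_false]
          rintro ⟨hcyl, hA1, hA2⟩
          apply hc
          have e1 : ω k = v ⟨k, by omega⟩ := by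
            rw [hcyl k (by omega)]; exact cylExt_coe (k+1) v ⟨k, by omega⟩
          have e2 : ω (k+1) = v ⟨k+1, by omega⟩ := by
            rw [hcyl (k+1) le_rfl]; exact cylExt_coe (k+1) v ⟨k+1, by omega⟩
          exact ⟨e1 ▸ hA1, e2 ▸ hA2⟩
        rw [this, measure_empty]
    simp [hterm]
  have hbadAll : μmod (⋃ k, {ω : ℕ → S | ω k ∈ A ∧ ω (k+1) ∉ A}) = 0 :=
    measure_iUnion_null hbad
  -- first hitting decomposition: μ hit = μmod hit
  set FH : ℕ → Set (ℕ → S) := fun n => {ω | ω n ∈ A ∧ ∀ i < n, ω i ∉ A} with hFH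
  have hFHP : ∀ n, FH n = {ω : ℕ → S |
      (fun v : Fin (n+1) → S => v (Fin.last n) ∈ A ∧ ∀ i : Fin (n+1), (i : ℕ) < n → v i ∉ A)
        (fun i => ω (i : ℕ))} := by
    intro n
    ext ω
    simp only [hFH, Set.mem_setOf_eq, Fin.val_last]
    constructor
    · rintro ⟨h1, h2⟩
      exact ⟨h1, fun i hi => h2 i hi⟩
    · rintro ⟨h1, h2⟩
      refine ⟨h1, fun i hi => ?_⟩
      exact h2 ⟨i, Nat.lt_succ_of_lt hi⟩ hi
  have hFHeq : ∀ n, μ (FH n) = μmod (FH n) := by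
    intro n
    rw [hFHP n,
      cyl_decomp μ n (fun v : Fin (n+1) → S =>
        v (Fin.last n) ∈ A ∧ ∀ i : Fin (n+1), (i : ℕ) < n → v i ∉ A),
      cyl_decomp μmod n (fun v : Fin (n+1) → S =>
        v (Fin.last n) ∈ A ∧ ∀ i : Fin (n+1), (i : ℕ) < n → v i ∉ A)]
    refine Finset.sum_congr rfl (fun v hv => ?_)
    rw [hμ n (cylExt n v), hμmod n (cylExt n v)]
    congr 1
    congr 1
    refine Finset.prod_congr rfl (fun t ht => ?_)
    have ht' : t < n := Finset.mem_range.mp ht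
    have hvt : cylExt n v t = v ⟨t, Nat.lt_succ_of_lt ht'⟩ :=
      cylExt_coe n v ⟨t, Nat.lt_succ_of_lt ht'⟩
    have hvnA : cylExt n v t ∉ A := by
      rw [hvt]
      exact (Finset.mem_filter.mp hv).2.2 ⟨t, Nat.lt_succ_of_lt ht'⟩ ht'
    exact (hagree _ _ hvnA).symm
  have hFHmeas : ∀ n, MeasurableSet (FH n) := by
    intro n
    have : FH n = Oc n ∩ ⋂ i ∈ Set.Iio n, (Oc i)ᶜ := by
      ext ω; simp [hFH, hOc, Set.mem_iInter]
    rw [this]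
    exact (hOcMeas n).inter (MeasurableSet.biInter (Set.to_countable _)
      (fun i _ => (hOcMeas i).compl))
  have hFHdisj : Pairwise (Function.onFun Disjoint FH) := by
    intro m n hmn
    rcases Ne.lt_or_gt hmn with h | h
    · rw [Function.onFun, Set.disjoint_left]
      rintro ω ⟨h1, _⟩ ⟨_, h2⟩
      exact h2 m h h1
    · rw [Function.onFun, Set.disjoint_left]
      rintro ω ⟨_, h2⟩ ⟨h1, _⟩
      exact h2 n h h1
  have hhitU : {ω : ℕ → S | ∃ t : ℕ, ω t ∈ A} = ⋃ n, FH n := by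
    ext ω
    simp only [Set.mem_setOf_eq, Set.mem_iUnion, hFH]
    constructor
    · intro h
      exact ⟨Nat.find h, Nat.find_spec h, fun i hi => Nat.find_min h hi⟩
    · rintro ⟨n, h1, _⟩
      exact ⟨n, h1⟩
  have hhit_eq : μ {ω : ℕ → S | ∃ t : ℕ, ω t ∈ A} = μmod {ω : ℕ → S | ∃ t : ℕ, ω t ∈ A} := by
    rw [hhitU, measure_iUnion hFHdisj hFHmeas, measure_iUnion hFHdisj hFHmeas]
    exact tsum_congr hFHeq
  -- cumulative occupation sets, monotone
  set Ecum : ℕ → Set (ℕ → S) := fun k => {ω | ∃ j ≤ k, ω j ∈ A} with hEcum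
  have hEmono : Monotone Ecum := by
    intro a b hab ω
    rintro ⟨j, hj, hjA⟩
    exact ⟨j, hj.trans hab, hjA⟩
  have hEunion : (⋃ k, Ecum k) = {ω : ℕ → S | ∃ t : ℕ, ω t ∈ A} := by
    ext ω
    simp only [Set.mem_iUnion, hEcum, Set.mem_setOf_eq]
    constructor
    · rintro ⟨k, j, _, hjA⟩; exact ⟨j, hjA⟩
    · rintro ⟨t, ht⟩; exact ⟨t, t, le_rfl, ht⟩
  have crossing : ∀ (k : ℕ) (ω : ℕ → S) (j : ℕ), j ≤ k → ω j ∈ A → ω k ∉ A →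
      ∃ i, ω i ∈ A ∧ ω (i+1) ∉ A := by
    intro k
    induction k with
    | zero =>
      intro ω j hj hA hnA
      interval_cases j
      exact absurd hA hnA
    | succ k ih =>
      intro ω j hj hA hnA
      by_cases hk : ω k ∈ A
      · exact ⟨k, hk, hnA⟩
      · have hjk : j ≤ k := by
          rcases Nat.lt_succ_iff_lt_or_eq.mp (Nat.lt_succ_of_le hj) with h | h
          · omega
          · exact absurd (h ▸ hA) hnA
        exact ih ω j hjk hA hk
  have hEcum_eq : ∀ k, μmod (Ecum k) = μmod (Oc k) := by
    intro k
    refine le_antisymm ?_ (measure_mono (fun ω hω => ⟨k, le_rfl, hω⟩))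
    have hsub : Ecum k ⊆ Oc k ∪ ⋃ i, {ω : ℕ → S | ω i ∈ A ∧ ω (i+1) ∉ A} := by
      rintro ω ⟨j, hj, hjA⟩
      by_cases hk : ω k ∈ A
      · exact Or.inl hk
      · rcases crossing k ω j hj hjA hk with ⟨i, hi1, hi2⟩
        exact Or.inr (Set.mem_iUnion.mpr ⟨i, hi1, hi2⟩)
    calc μmod (Ecum k) ≤ μmod (Oc k ∪ ⋃ i, {ω : ℕ → S | ω i ∈ A ∧ ω (i+1) ∉ A}) :=
          measure_mono hsub
      _ ≤ μmod (Oc k) + μmod (⋃ i, {ω : ℕ → S | ω i ∈ A ∧ ω (i+1) ∉ A}) := measure_union_le _ _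
      _ = μmod (Oc k) := by rw [hbadAll, add_zero]
  -- convergence of occupation probabilities
  have htend : Tendsto (fun k => μmod (Oc k)) atTop
      (nhds (μmod {ω : ℕ → S | ∃ t : ℕ, ω t ∈ A})) := by
    have h1 := tendsto_measure_iUnion_atTop (μ := μmod) hEmono
    rw [hEunion] at h1
    exact h1.congr (fun k => hEcum_eq k)
  have htendR : Tendsto (fun k => (μmod (Oc k)).toReal) atTop
      (nhds (μmod {ω : ℕ → S | ∃ t : ℕ, ω t ∈ A}).toReal) :=
    (ENNReal.tendsto_toReal (measure_ne_top _ _)).comp htend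
  -- integral computation
  have hind : ∀ k, (fun ω : ℕ → S => if ω k ∈ A then (1:ℝ) else 0) = (Oc k).indicator 1 := by
    intro k
    funext ω
    simp [Set.indicator_apply, hOc]
  have hint : ∀ t : ℕ, (∫ ω, (∑ k ∈ Finset.range t, (if ω k ∈ A then (1:ℝ) else 0)) ∂μmod)
      = ∑ k ∈ Finset.range t, (μmod (Oc k)).toReal := by
    intro t
    rw [integral_finset_sum]
    · refine Finset.sum_congr rfl (fun k _ => ?_)
      rw [show (fun ω : ℕ → S => if ω k ∈ A then (1:ℝ) else 0) = (Oc k).indicator 1 from hind k]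
      exact integral_indicator_one (hOcMeas k)
    · intro k _
      rw [hind k]
      exact (integrable_const (1:ℝ)).indicator (hOcMeas k)
  rw [hhit_eq]
  have := htendR.cesaro
  refine this.congr (fun t => ?_)
  rw [hint t]
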